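/- With rewards r(B) = 0, r(G) = 1 (constant over time), the per-arm dual value function V_t[λ](n^B, n^G), viewed as a function of the state, is nondecreasing in n^G and nonincreasing in n^B along the probability: precisely, if n^G/(n^B+n^G) ≤ m^G/(m^B+m^G) and n^B + n^G = m^B + m^G, then V_t[λ](n^B, n^G) ≤ V_t[λ](m^B, m^G). -/

import Mathlib

/-- Per-arm dual Bellman value function `V_t^a[λ]`, indexed by remaining fuel
`k = T - t`, current time `t`, and Beta-posterior counts `(n^B, n^G)`.
Outcomes: `false = B`, `true = G`. -/
noncomputable def Vdual (r : ℕ → Bool → ℝ) (lam : ℕ → ℝ) : ℕ → ℕ → ℕ → ℕ → ℝ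
  | 0, _, _, _ => 0
  | k + 1, t, nB, nG =>
      max (Vdual r lam k (t + 1) nB nG)
        (-lam t
          + (nB : ℝ) / (nB + nG) * (r t false + Vdual r lam k (t + 1) (nB + 1) nG)
          + (nG : ℝ) / (nB + nG) * (r t true + Vdual r lam k (t + 1) nB (nG + 1)))

lemma Vgap (lam : ℕ → ℝ) : ∀ k t nB nG : ℕ,
    Vdual (fun _ b => if b then (1 : ℝ) else 0) lam k t (nB + 1) nG ≤
      1 + Vdual (fun _ b => if b then (1 : ℝ) else 0) lam k t nB (nG + 1) := by
  intro k
  induction k with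
  | zero => intro t nB nG; simp [Vdual]
  | succ k ih =>
    intro t nB nG
    show max _ _ ≤ 1 + max _ _
    apply max_le
    · exact le_trans (ih (t+1) nB nG) (by gcongr; exact le_max_left _ _)
    · apply le_trans ?_ (add_le_add_right (le_max_right _ _) 1)
      simp only [if_true, if_false]
      set X := Vdual (fun _ b => if b then (1:ℝ) else 0) lam k (t+1) (nB+1+1) nG with hX
      set Y := Vdual (fun _ b => if b then (1:ℝ) else 0) lam k (t+1) (nB+1) (nG+1) with hY
      set Z := Vdual (fun _ b => if b then (1:ℝ) else 0) lam k (t+1) nB (nG+1+1) with hZ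
      have h1 : X ≤ 1 + Y := ih (t+1) (nB+1) nG
      have h2 : Y ≤ 1 + Z := ih (t+1) nB (nG+1)
      have hd : (0:ℝ) < (nB:ℝ) + nG + 1 := by positivity
      push_cast
      have hne : ((nB:ℝ) + nG + 1) ≠ 0 := ne_of_gt hd
      rw [show (nB:ℝ)+1+nG = (nB:ℝ)+nG+1 by ring, show (nB:ℝ)+(nG+1) = (nB:ℝ)+nG+1 by ring]
      rw [div_mul_eq_mul_div, div_mul_eq_mul_div, div_mul_eq_mul_div, div_mul_eq_mul_div]
      have e1 : -lam t + ((nB:ℝ)+1)*(0+X)/((nB:ℝ)+nG+1) + (nG:ℝ)*(1+Y)/((nB:ℝ)+nG+1)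
          = -lam t + (((nB:ℝ)+1)*(0+X) + (nG:ℝ)*(1+Y))/((nB:ℝ)+nG+1) := by ring
      have e2 : 1 + (-lam t + (nB:ℝ)*(0+Y)/((nB:ℝ)+nG+1) + ((nG:ℝ)+1)*(1+Z)/((nB:ℝ)+nG+1))
          = -lam t + (((nB:ℝ)+nG+1) + ((nB:ℝ)*(0+Y) + ((nG:ℝ)+1)*(1+Z)))/((nB:ℝ)+nG+1) := by
        field_simp; ring
      have hh1 := mul_le_mul_of_nonneg_left h1 (by positivity : (0:ℝ) ≤ (nB:ℝ)+1)
      have hh2 := mul_le_mul_of_nonneg_left h2 (by positivity : (0:ℝ) ≤ (nG:ℝ)+1)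
      have key : ((nB:ℝ)+1)*(0+X) + (nG:ℝ)*(1+Y)
          ≤ ((nB:ℝ)+nG+1) + ((nB:ℝ)*(0+Y) + ((nG:ℝ)+1)*(1+Z)) := by nlinarith
      rw [e1, e2]
      have := (div_le_div_iff_of_pos_right hd).mpr key
      linarith

lemma Vmono (lam : ℕ → ℝ) : ∀ k t nB nG mB mG : ℕ, nB + nG = mB + mG → nG ≤ mG →
    Vdual (fun _ b => if b then (1 : ℝ) else 0) lam k t nB nG ≤
      Vdual (fun _ b => if b then (1 : ℝ) else 0) lam k t mB mG := by
  intro k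
  induction k with
  | zero => intro t nB nG mB mG _ _; simp [Vdual]
  | succ k ih =>
    intro t nB nG mB mG hsum hle
    rcases Nat.eq_zero_or_pos (nB + nG) with h0 | hpos
    · obtain ⟨rfl, rfl, rfl, rfl⟩ : nB = 0 ∧ nG = 0 ∧ mB = 0 ∧ mG = 0 := by omega
      exact le_refl _
    show max _ _ ≤ max _ _
    apply max_le
    · exact le_trans (ih (t+1) nB nG mB mG hsum hle) (le_max_left _ _)
    · refine le_trans ?_ (le_max_right _ _)
      simp only [Bool.false_eq_true, if_false, if_true]
      set A := Vdual (fun _ b => if b then (1:ℝ) else 0) lam k (t+1) (nB+1) nG with hA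
      set B := Vdual (fun _ b => if b then (1:ℝ) else 0) lam k (t+1) nB (nG+1) with hB
      set A' := Vdual (fun _ b => if b then (1:ℝ) else 0) lam k (t+1) (mB+1) mG with hA'
      set B' := Vdual (fun _ b => if b then (1:ℝ) else 0) lam k (t+1) mB (mG+1) with hB'
      have hAA : A ≤ A' := ih (t+1) (nB+1) nG (mB+1) mG (by omega) hle
      have hBB : B ≤ B' := ih (t+1) nB (nG+1) mB (mG+1) (by omega) (by omega)
      have hgap : A' ≤ 1 + B' := Vgap lam k (t+1) mB mG
      have hd : (0:ℝ) < (nB:ℝ) + nG := by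
        have : (0:ℝ) < ((nB + nG : ℕ) : ℝ) := by exact_mod_cast hpos
        push_cast at this; linarith
      have hs : (mB:ℝ) + mG = (nB:ℝ) + nG := by exact_mod_cast hsum.symm
      have hnBr : (nB:ℝ) = (mB:ℝ) + mG - nG := by
        have : ((nB:ℝ)) + nG = (mB:ℝ) + mG := by exact_mod_cast hsum
        linarith
      have hler : (nG:ℝ) ≤ (mG:ℝ) := by exact_mod_cast hle
      rw [hs]
      have e1 : -lam t + (nB:ℝ)/((nB:ℝ)+nG)*(0+A) + (nG:ℝ)/((nB:ℝ)+nG)*(1+B)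
          = -lam t + ((nB:ℝ)*(0+A) + (nG:ℝ)*(1+B))/((nB:ℝ)+nG) := by ring
      have e2 : -lam t + (mB:ℝ)/((nB:ℝ)+nG)*(0+A') + (mG:ℝ)/((nB:ℝ)+nG)*(1+B')
          = -lam t + ((mB:ℝ)*(0+A') + (mG:ℝ)*(1+B'))/((nB:ℝ)+nG) := by ring
      rw [e1, e2]
      have hh1 := mul_le_mul_of_nonneg_left hAA (by positivity : (0:ℝ) ≤ (nB:ℝ))
      have hh2 := mul_le_mul_of_nonneg_left hBB (by positivity : (0:ℝ) ≤ (nG:ℝ))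
      have h3 : (0:ℝ) ≤ ((mG:ℝ) - nG) * (1 + B' - A') :=
        mul_nonneg (by linarith) (by linarith)
      have h4 : (nB:ℝ) * A' = (mB:ℝ) * A' + ((mG:ℝ) - nG) * A' := by rw [hnBr]; ring
      have key : (nB:ℝ)*(0+A) + (nG:ℝ)*(1+B) ≤ (mB:ℝ)*(0+A') + (mG:ℝ)*(1+B') := by
        nlinarith
      have := (div_le_div_iff_of_pos_right hd).mpr key
      linarith


/-- with rewards `r(B) = 0`, `r(G) = 1`, the per-arm dual value is
monotone along the posterior success probability: if `n^G/(n^B+n^G) ≤ m^G/(m^B+m^G)`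
and `n^B + n^G = m^B + m^G`, then `V_t[λ](n^B,n^G) ≤ V_t[λ](m^B,m^G)`. -/
theorem Vdual_monotone_in_state (T : ℕ) (hT : 1 ≤ T) (lam : ℕ → ℝ) (t : ℕ) (ht : t ≤ T)
    (nB nG mB mG : ℕ) (hnB : 1 ≤ nB) (hnG : 1 ≤ nG) (hmB : 1 ≤ mB) (hmG : 1 ≤ mG)
    (hsum : nB + nG = mB + mG)
    (hprob : (nG : ℝ) / (nB + nG) ≤ (mG : ℝ) / (mB + mG)) :
    Vdual (fun _ b => if b then (1 : ℝ) else 0) lam (T - t) t nB nG ≤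
      Vdual (fun _ b => if b then (1 : ℝ) else 0) lam (T - t) t mB mG := by
  have hd : (0:ℝ) < (nB:ℝ) + nG := by positivity
  have hs : (mB:ℝ) + mG = (nB:ℝ) + nG := by exact_mod_cast hsum.symm
  rw [hs] at hprob
  have hle : nG ≤ mG := by
    have := (div_le_div_iff_of_pos_right hd).mp hprob
    exact_mod_cast this
  exact Vmono lam (T - t) t nB nG mB mG hsum hle
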